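/- For every n ≥ 1 there exists a permutation network on n elements of length Σ_{i=1}^{n} ⌈log₂ i⌉. -/

import Mathlib

/-- The permutation of `ℕ` obtained by applying the transpositions in the list
in order (first element of the list applied first). -/
def netPerm (S : List (ℕ × ℕ)) : Equiv.Perm ℕ :=
  (S.map (fun p => Equiv.swap p.1 p.2)).reverse.prod

/-- `L` is a `t`-reachability network on the ground set `{1, …, n}`:
every entry is a transposition of two distinct points of `{1, …, n}`, and for every
choice of `t` distinct points `x 0, …, x (t-1)` of `{1, …, n}` there is a subsequence
of `L` whose composition (applied in order) maps `j + 1` to `x j` for `0 ≤ j < t`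
(i.e. maps the point `j` to `x_j` for `1 ≤ j ≤ t`). -/
def IsReachNet (n t : ℕ) (L : List (ℕ × ℕ)) : Prop :=
  (∀ p ∈ L, p.1 ∈ Finset.Icc 1 n ∧ p.2 ∈ Finset.Icc 1 n ∧ p.1 ≠ p.2) ∧
  ∀ x : Fin t → ℕ, (∀ j, x j ∈ Finset.Icc 1 n) → Function.Injective x →
    ∃ S : List (ℕ × ℕ), S.Sublist L ∧ ∀ j : Fin t, netPerm S (j.val + 1) = x j

/-- `L` is a permutation network on the ground set `{1, …, n}`: every entry is a
transposition of two distinct points of `{1, …, n}`, and every permutation of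
`{1, …, n}` (i.e. every permutation of `ℕ` fixing the complement of `{1, …, n}`)
is the composition, in order, of some subsequence of `L`. -/
def IsPermNet (n : ℕ) (L : List (ℕ × ℕ)) : Prop :=
  (∀ p ∈ L, p.1 ∈ Finset.Icc 1 n ∧ p.2 ∈ Finset.Icc 1 n ∧ p.1 ≠ p.2) ∧
  ∀ σ : Equiv.Perm ℕ, (∀ x : ℕ, x ∉ Finset.Icc 1 n → σ x = x) →
    ∃ S : List (ℕ × ℕ), S.Sublist L ∧ netPerm S = σ


lemma clog_step (m : ℕ) (hm : 2 ≤ m) : Nat.clog 2 m = Nat.clog 2 ((m+1)/2) + 1 := by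
  rw [Nat.clog_of_two_le (by norm_num) hm, show (m+2-1)/2 = (m+1)/2 by omega]

lemma Wrec : ∀ n, 2 ≤ n → ∑ i ∈ Finset.Icc 1 n, Nat.clog 2 i =
    (∑ i ∈ Finset.Icc 1 ((n+1)/2), Nat.clog 2 i) + (∑ i ∈ Finset.Icc 1 (n/2), Nat.clog 2 i) + (n-1) := by
  intro n
  induction n using Nat.strong_induction_on with
  | _ n IH =>
    intro hn
    rcases Nat.lt_or_ge n 4 with h4 | h4
    · interval_cases n
      · rw [show (2:ℕ) = 1 + 1 from rfl, Finset.sum_Icc_succ_top (by omega), Finset.Icc_self,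
          Finset.sum_singleton]
        simp [clog_step 2 (by norm_num)]
      · rw [show (3:ℕ) = 2 + 1 from rfl, Finset.sum_Icc_succ_top (by omega),
          show (2:ℕ) = 1 + 1 from rfl, Finset.sum_Icc_succ_top (by omega), Finset.Icc_self,
          Finset.sum_singleton]
        simp [clog_step 3 (by norm_num), clog_step 2 (by norm_num)]
    · obtain ⟨m, rfl⟩ : ∃ m, n = m + 2 := ⟨n - 2, by omega⟩
      have hm : 2 ≤ m := by omega
      have e1 : ∑ i ∈ Finset.Icc 1 (m+2), Nat.clog 2 i
          = (∑ i ∈ Finset.Icc 1 m, Nat.clog 2 i) + Nat.clog 2 (m+1) + Nat.clog 2 (m+2) := by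
        rw [Finset.sum_Icc_succ_top (by omega), Finset.sum_Icc_succ_top (by omega)]
      have e2 : (m+2+1)/2 = (m+1)/2 + 1 := by omega
      have e3 : (m+2)/2 = m/2 + 1 := by omega
      have e4 : ∑ i ∈ Finset.Icc 1 ((m+1)/2 + 1), Nat.clog 2 i
          = (∑ i ∈ Finset.Icc 1 ((m+1)/2), Nat.clog 2 i) + Nat.clog 2 ((m+1)/2 + 1) :=
        Finset.sum_Icc_succ_top (by omega) _
      have e5 : ∑ i ∈ Finset.Icc 1 (m/2 + 1), Nat.clog 2 i
          = (∑ i ∈ Finset.Icc 1 (m/2), Nat.clog 2 i) + Nat.clog 2 (m/2 + 1) :=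
        Finset.sum_Icc_succ_top (by omega) _
      have c1 : Nat.clog 2 (m+1) = Nat.clog 2 (m/2 + 1) + 1 := by
        rw [clog_step (m+1) (by omega), show (m+1+1)/2 = m/2+1 by omega]
      have c2 : Nat.clog 2 (m+2) = Nat.clog 2 ((m+1)/2 + 1) + 1 := by
        rw [clog_step (m+2) (by omega), show (m+2+1)/2 = (m+1)/2+1 by omega]
      have hIH := IH m (by omega) hm
      rw [e1, e2, e3, e4, e5, c1, c2, hIH]
      omega


lemma netPerm_nil : netPerm [] = 1 := rfl

lemma netPerm_cons (p : ℕ × ℕ) (S : List (ℕ × ℕ)) :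
    netPerm (p :: S) = netPerm S * Equiv.swap p.1 p.2 := by
  simp [netPerm]

lemma netPerm_append (S T : List (ℕ × ℕ)) :
    netPerm (S ++ T) = netPerm T * netPerm S := by
  simp [netPerm, List.reverse_append]

lemma netPerm_fix (S : List (ℕ × ℕ)) (x : ℕ) (h : ∀ p ∈ S, p.1 ≠ x ∧ p.2 ≠ x) :
    netPerm S x = x := by
  induction S with
  | nil => rfl
  | cons p S IH =>
    rw [netPerm_cons]
    have hp := h p (by simp)
    simp only [Equiv.Perm.mul_apply, Equiv.swap_apply_of_ne_of_ne (Ne.symm hp.1) (Ne.symm hp.2)]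
    exact IH (fun q hq => h q (by simp [hq]))

def pairList (a : ℕ) (l : List ℕ) : List (ℕ × ℕ) := l.map (fun i => (i + 1, a + i + 1))

lemma netPerm_pairList (a : ℕ) : ∀ (l : List ℕ), l.Nodup → (∀ i ∈ l, i < a) → ∀ x,
    netPerm (pairList a l) x =
      if 1 ≤ x ∧ x ≤ a ∧ (x - 1) ∈ l then x + a
      else if a + 1 ≤ x ∧ (x - a - 1) ∈ l then x - a
      else x := by
  intro l
  induction l with
  | nil => intro _ _ x; simp [pairList, netPerm_nil]
  | cons i t IH =>
    intro hnd hlt x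
    have hit : i ∉ t := (List.nodup_cons.1 hnd).1
    have hia : i < a := hlt i (by simp)
    have hrest := IH (List.nodup_cons.1 hnd).2 (fun j hj => hlt j (by simp [hj]))
    rw [show pairList a (i :: t) = (i+1, a+i+1) :: pairList a t from rfl, netPerm_cons]
    simp only [Equiv.Perm.mul_apply]
    rcases eq_or_ne x (i+1) with rfl | hx1
    · rw [Equiv.swap_apply_left, hrest]
      have h1 : ¬ (1 ≤ a+i+1 ∧ a+i+1 ≤ a ∧ (a+i+1-1) ∈ t) := fun h => by omega
      have h2 : ¬ (a + 1 ≤ a+i+1 ∧ (a+i+1-a-1) ∈ t) := by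
        rw [show a+i+1-a-1 = i by omega]; exact fun h => hit h.2
      rw [if_neg h1, if_neg h2,
        if_pos ⟨by omega, by omega, by rw [show i+1-1 = i by omega]; exact List.mem_cons_self⟩]
      omega
    · rcases eq_or_ne x (a+i+1) with rfl | hx2
      · rw [Equiv.swap_apply_right, hrest]
        have h1 : ¬ (1 ≤ i+1 ∧ i+1 ≤ a ∧ (i+1-1) ∈ t) := by
          rw [show i+1-1 = i by omega]; exact fun h => hit h.2.2
        have h2 : ¬ (a + 1 ≤ i+1 ∧ (i+1-a-1) ∈ t) := fun h => by omega
        rw [if_neg h1, if_neg h2, if_neg (show ¬ (1 ≤ a+i+1 ∧ a+i+1 ≤ a ∧ (a+i+1-1) ∈ (i::t)) from fun h => by omega),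
          if_pos ⟨by omega, by rw [show a+i+1-a-1 = i by omega]; exact List.mem_cons_self⟩]
        omega
      · rw [Equiv.swap_apply_of_ne_of_ne hx1 hx2, hrest]
        have m1 : (1 ≤ x ∧ x ≤ a ∧ (x-1) ∈ (i::t)) ↔ (1 ≤ x ∧ x ≤ a ∧ (x-1) ∈ t) := by
          constructor
          · rintro ⟨h1, h2, h3⟩
            refine ⟨h1, h2, ?_⟩
            rcases List.mem_cons.1 h3 with h | h
            · exact absurd (by omega : x = i + 1) hx1
            · exact h
          · rintro ⟨h1, h2, h3⟩; exact ⟨h1, h2, List.mem_cons_of_mem _ h3⟩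
        have m2 : (a + 1 ≤ x ∧ (x-a-1) ∈ (i::t)) ↔ (a + 1 ≤ x ∧ (x-a-1) ∈ t) := by
          constructor
          · rintro ⟨h1, h3⟩
            refine ⟨h1, ?_⟩
            rcases List.mem_cons.1 h3 with h | h
            · exact absurd (by omega : x = a + i + 1) hx2
            · exact h
          · rintro ⟨h1, h3⟩; exact ⟨h1, List.mem_cons_of_mem _ h3⟩
        rw [show (if 1 ≤ x ∧ x ≤ a ∧ (x-1) ∈ (i::t) then x + a
            else if a + 1 ≤ x ∧ (x-a-1) ∈ (i::t) then x - a else x)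
          = (if 1 ≤ x ∧ x ≤ a ∧ (x-1) ∈ t then x + a
            else if a + 1 ≤ x ∧ (x-a-1) ∈ t then x - a else x) by
          rw [if_congr m1 rfl rfl, if_congr m2 rfl rfl]]

lemma netPerm_pairList_sq (a : ℕ) (l : List ℕ) (hnd : l.Nodup) (hlt : ∀ i ∈ l, i < a) (x : ℕ) :
    netPerm (pairList a l) (netPerm (pairList a l) x) = x := by
  have E := netPerm_pairList a l hnd hlt
  rw [E x]
  by_cases C1 : 1 ≤ x ∧ x ≤ a ∧ (x-1) ∈ l
  · rw [if_pos C1, E (x+a), if_neg (fun h => by omega : ¬ (1 ≤ x+a ∧ x+a ≤ a ∧ (x+a-1) ∈ l)),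
      if_pos ⟨by omega, by rw [show x+a-a-1 = x-1 by omega]; exact C1.2.2⟩]
    omega
  · rw [if_neg C1]
    by_cases C2 : a + 1 ≤ x ∧ (x-a-1) ∈ l
    · have hia := hlt _ C2.2
      rw [if_pos C2, E (x-a),
        if_pos ⟨by omega, by omega, by rw [show x-a-1 = x-a-1 from rfl]; exact C2.2⟩]
      omega
    · rw [if_neg C2, E x, if_neg C1, if_neg C2]

lemma netPerm_shift (a : ℕ) : ∀ (L : List (ℕ × ℕ)) (x : ℕ),
    netPerm (L.map (fun p => (p.1 + a, p.2 + a))) x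
      = if a ≤ x then netPerm L (x - a) + a else x := by
  intro L
  induction L with
  | nil =>
    intro x
    simp only [List.map_nil, netPerm_nil, Equiv.Perm.one_apply]
    split_ifs with h <;> omega
  | cons p T IH =>
    intro x
    rw [show (p :: T).map (fun p => (p.1 + a, p.2 + a))
        = (p.1 + a, p.2 + a) :: T.map (fun p => (p.1 + a, p.2 + a)) from rfl,
      netPerm_cons, netPerm_cons]
    simp only [Equiv.Perm.mul_apply]
    by_cases hx : a ≤ x
    · have hswap : Equiv.swap (p.1 + a) (p.2 + a) x = Equiv.swap p.1 p.2 (x - a) + a := by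
        rcases eq_or_ne x (p.1 + a) with rfl | h1
        · rw [Equiv.swap_apply_left, show p.1 + a - a = p.1 by omega, Equiv.swap_apply_left]
        · rcases eq_or_ne x (p.2 + a) with rfl | h2
          · rw [Equiv.swap_apply_right, show p.2 + a - a = p.2 by omega, Equiv.swap_apply_right]
          · rw [Equiv.swap_apply_of_ne_of_ne h1 h2,
              Equiv.swap_apply_of_ne_of_ne (by omega) (by omega)]
            omega
      rw [hswap, IH, if_pos (by omega : a ≤ Equiv.swap p.1 p.2 (x - a) + a), if_pos hx,
        show Equiv.swap p.1 p.2 (x - a) + a - a = Equiv.swap p.1 p.2 (x - a) by omega]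
    · rw [if_neg hx, Equiv.swap_apply_of_ne_of_ne (by omega) (by omega), IH, if_neg hx]

lemma colorBase (ι κ : ℕ → ℕ) (hι : Function.Involutive ι) (hκ : Function.Involutive κ) (u : ℕ)
    (hsmall : ∀ x, ι x ≠ x → x = u ∨ ι x = u) :
    ∃ c : ℕ → Bool, c u = true ∧
      (∀ x, ι x ≠ x → c (ι x) ≠ c x) ∧ (∀ x, κ x ≠ x → c (κ x) ≠ c x) := by
  classical
  obtain ⟨w, hw⟩ : ∃ w, ι u = w := ⟨_, rfl⟩
  obtain ⟨p, hp⟩ : ∃ p, κ u = p := ⟨_, rfl⟩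
  obtain ⟨q, hq⟩ : ∃ q, κ w = q := ⟨_, rfl⟩
  have hwu : ι w = u := by rw [← hw, hι]
  have hpu : κ p = u := by rw [← hp, hκ]
  have hqw : κ q = w := by rw [← hq, hκ]
  refine ⟨fun x => if x = u then true else if x = w then false else if x = p then false
    else if x = q then true else decide (x < κ x), by simp, ?_, ?_⟩
  · -- ι constraints
    intro x hx
    have hmoved : x = u ∨ x = w := by
      rcases hsmall x hx with h | h
      · exact Or.inl h
      · exact Or.inr (by rw [← hι x, h, hw])
    have hne : w ≠ u := by
      rcases hmoved with rfl | rfl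
      · rw [← hw]; exact hx
      · rw [← hw]; exact fun h => hx (by rw [hwu, ← h, hw])
    rcases hmoved with rfl | rfl
    · rw [hw]
      simp only [if_pos rfl, if_neg hne]
      simp
    · rw [hwu]
      simp only [if_pos rfl, if_neg hne]
      simp
  · -- κ constraints
    intro x hx
    by_cases hxu : x = u
    · rw [hxu, hp]
      have hpu2 : p ≠ u := by rw [← hp]; rw [hxu] at hx; exact hx
      by_cases hpw : p = w
      · simp only [if_pos rfl, if_neg hpu2, if_pos hpw]
        simp
      · simp only [if_pos rfl, if_neg hpu2, if_neg hpw]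
        simp
    · by_cases hxw : x = w
      · rw [hxw, hq]
        have hqw2 : q ≠ w := by rw [← hq]; rw [hxw] at hx; exact hx
        by_cases hqu : q = u
        · simp only [if_pos rfl, if_pos hqu, if_neg hxu, if_neg ((hxw ▸ hxu) : w ≠ u)]
          simp
        · have hqp : q ≠ p := by
            intro h
            exact (hxw ▸ hxu : w ≠ u) (hκ.injective (by rw [hq, hp, h]))
          simp only [if_pos rfl, if_neg hqu, if_neg hqw2, if_neg hqp,
            if_neg ((hxw ▸ hxu) : w ≠ u)]
          simp
      · by_cases hxp : x = p
        · rw [hxp, hpu]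
          have hwu2 : ¬ p = w := by rw [← hxp]; exact hxw
          simp only [if_pos rfl, if_neg hxu, if_neg hxw, if_neg ((hxp ▸ hxu) : ¬ p = u),
            if_neg ((hxp ▸ hxw) : ¬ p = w), if_pos rfl]
          simp
        · by_cases hxq : x = q
          · rw [hxq, hqw]
            have hwu : ¬ w = u := by
              intro h
              exact hxp (by rw [hxq, ← hq, h, hp])
            simp only [if_neg hwu, if_pos rfl, if_neg ((hxq ▸ hxu) : ¬ q = u),
              if_neg ((hxq ▸ hxw) : ¬ q = w), if_neg ((hxq ▸ hxp) : ¬ q = p), if_pos rfl]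
            simp
          · -- generic
            have h1 : κ x ≠ u := fun h => hxp (by rw [← hp, ← h, hκ])
            have h2 : κ x ≠ w := fun h => hxq (by rw [← hq, ← h, hκ])
            have h3 : κ x ≠ p := fun h => hxu (hκ.injective (by rw [hp, h]))
            have h4 : κ x ≠ q := fun h => hxw (hκ.injective (by rw [hq, h]))
            simp only [if_neg h1, if_neg h2, if_neg h3, if_neg h4, if_neg hxu, if_neg hxw,
              if_neg hxp, if_neg hxq]
            rw [hκ]
            rcases lt_or_gt_of_ne hx with h | h
            · simp [h, Nat.lt_asymm h]
            · simp [h, Nat.lt_asymm h]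

lemma colorLift (κ : ℕ → ℕ) (hκ : Function.Involutive κ) (u p q p0 q0 : ℕ)
    (hqp : q ≠ p) (hpu : p ≠ u) (hqu : q ≠ u) (hp0 : κ p = p0) (hq0 : κ q = q0)
    (c' : ℕ → Bool) (hc'u : c' u = true)
    (hc'κ : ∀ x, x ≠ p → x ≠ q → x ≠ p0 → x ≠ q0 → κ x ≠ x → c' (κ x) ≠ c' x)
    (hc'edge : p0 ≠ p → p0 ≠ q → q0 ≠ q → q0 ≠ p → c' q0 ≠ c' p0) :
    ∃ c : ℕ → Bool, c u = true ∧ c p ≠ c q ∧ (∀ x, x ≠ p → x ≠ q → c x = c' x) ∧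
      (∀ x, κ x ≠ x → c (κ x) ≠ c x) := by
  classical
  have hκp0 : κ p0 = p := by rw [← hp0, hκ]
  have hκq0 : κ q0 = q := by rw [← hq0, hκ]
  obtain ⟨cp, hcp⟩ : ∃ cp : Bool, (if p0 ≠ p ∧ p0 ≠ q then !c' p0
      else if q0 ≠ q ∧ q0 ≠ p then c' q0 else true) = cp := ⟨_, rfl⟩
  have hcp1 : ∀ (h : p0 ≠ p ∧ p0 ≠ q), cp = !c' p0 := fun h => by rw [← hcp, if_pos h]
  have hcp2 : ∀ (h : ¬(p0 ≠ p ∧ p0 ≠ q)) (h2 : q0 ≠ q ∧ q0 ≠ p), cp = c' q0 :=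
    fun h h2 => by rw [← hcp, if_neg h, if_pos h2]
  refine ⟨fun x => if x = p then cp else if x = q then !cp else c' x,
    ?_, ?_, ?_, ?_⟩
  · simp only [if_neg (Ne.symm hpu), if_neg (Ne.symm hqu)]
    exact hc'u
  · simp only [if_pos rfl, if_neg hqp]
    simp
  · intro x hxp hxq
    simp only [if_neg hxp, if_neg hxq]
  · intro x hx
    by_cases hxp : x = p
    · rw [hxp, hp0]
      have hp0p : p0 ≠ p := by rw [← hp0]; rw [hxp] at hx; exact hx
      by_cases hp0q : p0 = q
      · simp only [if_neg hp0p, if_pos hp0q, if_pos rfl]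
        simp
      · simp only [if_neg hp0p, if_neg hp0q, if_pos rfl]
        rw [hcp1 ⟨hp0p, hp0q⟩]
        simp
    · by_cases hxq : x = q
      · rw [hxq, hq0]
        have hq0q : q0 ≠ q := by rw [← hq0]; rw [hxq] at hx; exact hx
        by_cases hq0p : q0 = p
        · simp only [if_pos hq0p, if_neg hqp, if_pos rfl]
          simp
        · simp only [if_neg hq0p, if_neg hq0q, if_neg hqp, if_pos rfl]
          by_cases hA : p0 ≠ p ∧ p0 ≠ q
          · rw [hcp1 hA, Bool.not_not]
            exact hc'edge hA.1 hA.2 hq0q hq0p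
          · rw [hcp2 hA ⟨hq0q, hq0p⟩]
            simp
      · simp only [if_neg hxp, if_neg hxq]
        by_cases hkp : κ x = p
        · have hxp0 : x = p0 := by rw [← hp0, ← hkp, hκ]
          rw [hkp, hxp0]
          simp only [if_pos rfl]
          rw [hcp1 ⟨(hxp0 ▸ hxp : ¬ p0 = p), (hxp0 ▸ hxq : ¬ p0 = q)⟩]
          simp
        · by_cases hkq : κ x = q
          · have hxq0 : x = q0 := by rw [← hq0, ← hkq, hκ]
            rw [hkq, hxq0]
            simp only [if_neg hqp, if_pos rfl]
            have hq0q : q0 ≠ q := hxq0 ▸ hxq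
            have hq0p : q0 ≠ p := hxq0 ▸ hxp
            by_cases hA : p0 ≠ p ∧ p0 ≠ q
            · rw [hcp1 hA, Bool.not_not]
              exact (hc'edge hA.1 hA.2 hq0q hq0p).symm
            · rw [hcp2 hA ⟨hq0q, hq0p⟩]
              simp
          · have hxp0 : x ≠ p0 := fun h => hkp (by rw [h, hκp0])
            have hxq0 : x ≠ q0 := fun h => hkq (by rw [h, hκq0])
            simp only [if_neg hkp, if_neg hkq]
            exact hc'κ x hxp hxq hxp0 hxq0 hx

lemma colorC : ∀ (m : ℕ) (s : Finset ℕ) (ι κ : ℕ → ℕ), s.card ≤ m →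
    Function.Involutive ι → Function.Involutive κ →
    (∀ x, ι x ≠ x → x ∈ s) → ∀ u, ∃ c : ℕ → Bool, c u = true ∧
      (∀ x, ι x ≠ x → c (ι x) ≠ c x) ∧ (∀ x, κ x ≠ x → c (κ x) ≠ c x) := by
  intro m
  induction m with
  | zero =>
    intro s ι κ hcard hι hκ hsupp u
    refine colorBase ι κ hι hκ u (fun x hx => absurd (hsupp x hx) ?_)
    simp [Finset.card_eq_zero.1 (Nat.le_zero.1 hcard)]
  | succ m IH =>
    intro s ι κ hcard hι hκ hsupp u
    by_cases hedge : ∃ p, ι p ≠ p ∧ p ≠ u ∧ ι p ≠ u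
    · obtain ⟨p, hpm, hpu, hqu'⟩ := hedge
      obtain ⟨q, hq⟩ : ∃ q, ι p = q := ⟨_, rfl⟩
      have hιq : ι q = p := by rw [← hq, hι]
      have hqp : q ≠ p := by rw [← hq]; exact hpm
      have hqu : q ≠ u := hq ▸ hqu'
      have hps : p ∈ s := hsupp p hpm
      have hqs : q ∈ s := hsupp q (by rw [hιq]; exact fun h => hqp h.symm)
      obtain ⟨p0, hp0⟩ : ∃ p0, κ p = p0 := ⟨_, rfl⟩
      obtain ⟨q0, hq0⟩ : ∃ q0, κ q = q0 := ⟨_, rfl⟩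
      have hκp0 : κ p0 = p := by rw [← hp0, hκ]
      have hκq0 : κ q0 = q := by rw [← hq0, hκ]
      -- contracted involutions
      classical
      obtain ⟨ι', hι'def⟩ : ∃ f : ℕ → ℕ, (fun x => if x = p ∨ x = q then x else ι x) = f := ⟨_, rfl⟩
      obtain ⟨κ', hκ'def⟩ : ∃ f : ℕ → ℕ, (fun x => if x = p ∨ x = q then x
          else if x = p0 then (if q0 = q then x else q0)
          else if x = q0 then (if p0 = p then x else p0) else κ x) = f := ⟨_, rfl⟩
      have hι'eval : ∀ x, ι' x = if x = p ∨ x = q then x else ι x := fun x => by rw [← hι'def]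
      have hκ'eval : ∀ x, κ' x = if x = p ∨ x = q then x
          else if x = p0 then (if q0 = q then x else q0)
          else if x = q0 then (if p0 = p then x else p0) else κ x := fun x => by rw [← hκ'def]
      have hι'inv : Function.Involutive ι' := by
        intro x
        rw [hι'eval x]
        by_cases hx : x = p ∨ x = q
        · rw [if_pos hx, hι'eval x, if_pos hx]
        · have hne : ¬(ι x = p ∨ ι x = q) := by
            rintro (h | h)
            · exact hx (Or.inr (by rw [← hι x, h, hq]))
            · exact hx (Or.inl (by rw [← hι x, h, hιq]))
          rw [if_neg hx, hι'eval (ι x), if_neg hne]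
          exact hι x
      have hκ'inv : Function.Involutive κ' := by
        intro x
        rw [hκ'eval x]
        by_cases hx : x = p ∨ x = q
        · rw [if_pos hx, hκ'eval x, if_pos hx]
        · rw [if_neg hx]
          push_neg at hx
          by_cases hxp0 : x = p0
          · rw [if_pos hxp0]
            by_cases hq0q : q0 = q
            · rw [if_pos hq0q, hκ'eval x, if_neg (by push_neg; exact hx), if_pos hxp0,
                if_pos hq0q]
            · rw [if_neg hq0q]
              have hq0p : q0 ≠ p := by
                intro h
                have hxq' : x = q := by rw [← hκq0, h, hp0, ← hxp0]
                exact hx.2 hxq'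
              have hq0p0 : q0 ≠ p0 := by
                intro h
                exact hqp (by rw [← hκq0, h, hκp0])
              rw [hκ'eval q0, if_neg (by push_neg; exact ⟨hq0p, hq0q⟩), if_neg hq0p0,
                if_pos rfl, if_neg (by rw [← hxp0]; exact hx.1), hxp0]
          · rw [if_neg hxp0]
            by_cases hxq0 : x = q0
            · rw [if_pos hxq0]
              by_cases hp0p : p0 = p
              · rw [if_pos hp0p, hκ'eval x, if_neg (by push_neg; exact hx), if_neg hxp0,
                  if_pos hxq0, if_pos hp0p]
              · rw [if_neg hp0p]
                have hp0q : p0 ≠ q := by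
                  intro h
                  have hxp' : x = p := by rw [← hκp0, h, hq0, ← hxq0]
                  exact hx.1 hxp'
                have hp0q0 : p0 ≠ q0 := fun h => hqp (show q = p by rw [← hκq0, ← h]; exact hκp0)
                rw [hκ'eval p0, if_neg (by push_neg; exact ⟨hp0p, hp0q⟩), if_pos rfl,
                  if_neg (by rw [← hxq0]; exact hx.2), hxq0]
            · rw [if_neg hxq0]
              have h1 : κ x ≠ p := fun h => hxp0 (by rw [← hp0, ← h, hκ])
              have h2 : κ x ≠ q := fun h => hxq0 (by rw [← hq0, ← h, hκ])
              have h3 : κ x ≠ p0 := fun h => hx.1 (hκ.injective (by rw [hp0, h]))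
              have h4 : κ x ≠ q0 := fun h => hx.2 (hκ.injective (by rw [hq0, h]))
              rw [hκ'eval (κ x), if_neg (by push_neg; exact ⟨h1, h2⟩), if_neg h3, if_neg h4,
                hκ]
      have hsupp' : ∀ x, ι' x ≠ x → x ∈ (s.erase p).erase q := by
        intro x hx
        rw [hι'eval x] at hx
        by_cases hmem : x = p ∨ x = q
        · rw [if_pos hmem] at hx; exact absurd rfl hx
        · rw [if_neg hmem] at hx
          push_neg at hmem
          exact Finset.mem_erase.2 ⟨hmem.2, Finset.mem_erase.2 ⟨hmem.1, hsupp x hx⟩⟩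
      have hcard' : ((s.erase p).erase q).card ≤ m := by
        have h1 : ((s.erase p).erase q).card < (s.erase p).card :=
          Finset.card_erase_lt_of_mem (Finset.mem_erase.2 ⟨hqp, hqs⟩)
        have h2 : (s.erase p).card < s.card := Finset.card_erase_lt_of_mem hps
        omega
      obtain ⟨c', hc'u, hc'ι, hc'κ⟩ := IH ((s.erase p).erase q) ι' κ' hcard' hι'inv hκ'inv hsupp' u
      have hc'κ2 : ∀ x, x ≠ p → x ≠ q → x ≠ p0 → x ≠ q0 → κ x ≠ x → c' (κ x) ≠ c' x := by
        intro x h1 h2 h3 h4 h5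
        have he : κ' x = κ x := by
          rw [hκ'eval x, if_neg (by push_neg; exact ⟨h1, h2⟩), if_neg h3, if_neg h4]
        have := hc'κ x (by rw [he]; exact h5)
        rw [he] at this
        exact this
      have hc'edge : p0 ≠ p → p0 ≠ q → q0 ≠ q → q0 ≠ p → c' q0 ≠ c' p0 := by
        intro h1 h2 h3 h4
        have he : κ' p0 = q0 := by
          rw [hκ'eval p0, if_neg (by push_neg; exact ⟨h1, h2⟩), if_pos rfl, if_neg h3]
        have hne : κ' p0 ≠ p0 := by
          rw [he]
          intro h
          exact hqp (by rw [← hκq0, h, hκp0])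
        have := hc'κ p0 hne
        rw [he] at this
        exact this
      obtain ⟨c, hcu, hcpq, hcout, hcκ⟩ :=
        colorLift κ hκ u p q p0 q0 hqp hpu hqu hp0 hq0 c' hc'u hc'κ2 hc'edge
      refine ⟨c, hcu, ?_, hcκ⟩
      intro x hx
      by_cases hxp : x = p
      · rw [hxp, hq]
        exact fun h => hcpq h.symm
      · by_cases hxq : x = q
        · rw [hxq, hιq]
          exact hcpq
        · have hι1 : ι x ≠ p := fun h => hxq (by rw [← hι x, h, hq])
          have hι2 : ι x ≠ q := fun h => hxp (by rw [← hι x, h, hιq])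
          rw [hcout x hxp hxq, hcout (ι x) hι1 hι2]
          have he : ι' x = ι x := by rw [hι'eval x, if_neg (by push_neg; exact ⟨hxp, hxq⟩)]
          have := hc'ι x (by rw [he]; exact hx)
          rw [he] at this
          exact this
    · push_neg at hedge
      exact colorBase ι κ hι hκ u (fun x hx => by
        rcases eq_or_ne x u with h | h
        · exact Or.inl h
        · exact Or.inr (hedge x hx h))

lemma colorD (s : Finset ℕ) (ι κ : ℕ → ℕ) (hι : Function.Involutive ι)
    (hκ : Function.Involutive κ) (hs : ∀ x, ι x ≠ x → x ∈ s) (u v : ℕ) (huv : u ≠ v)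
    (hu : κ u = u) (hv : κ v = v) :
    ∃ c : ℕ → Bool, (∀ x, ι x ≠ x → c (ι x) ≠ c x) ∧ (∀ x, κ x ≠ x → c (κ x) ≠ c x) ∧
      c u = true ∧ c v = false := by
  classical
  obtain ⟨κ₂, hκ₂def⟩ : ∃ f : ℕ → ℕ, (fun x => if x = u then v else if x = v then u else κ x) = f :=
    ⟨_, rfl⟩
  have hκ₂eval : ∀ x, κ₂ x = if x = u then v else if x = v then u else κ x :=
    fun x => by rw [← hκ₂def]
  have hκ₂inv : Function.Involutive κ₂ := by
    intro x
    rw [hκ₂eval x]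
    by_cases hxu : x = u
    · rw [if_pos hxu, hκ₂eval v, if_neg (Ne.symm huv), if_pos rfl, hxu]
    · rw [if_neg hxu]
      by_cases hxv : x = v
      · rw [if_pos hxv, hκ₂eval u, if_pos rfl, hxv]
      · rw [if_neg hxv, hκ₂eval (κ x),
          if_neg (fun h => hxu (by rw [← hu, ← h, hκ])),
          if_neg (fun h => hxv (by rw [← hv, ← h, hκ])), hκ]
  obtain ⟨c, hcu, hcι, hcκ₂⟩ := colorC s.card s ι κ₂ le_rfl hι hκ₂inv hs u
  refine ⟨c, hcι, ?_, hcu, ?_⟩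
  · intro x hx
    have hxu : x ≠ u := fun h => hx (by rw [h, hu])
    have hxv : x ≠ v := fun h => hx (by rw [h, hv])
    have he : κ₂ x = κ x := by rw [hκ₂eval x, if_neg hxu, if_neg hxv]
    have := hcκ₂ x (by rw [he]; exact hx)
    rw [he] at this
    exact this
  · have he : κ₂ u = v := by rw [hκ₂eval u, if_pos rfl]
    have := hcκ₂ u (by rw [he]; exact Ne.symm huv)
    rw [he, hcu] at this
    simp only [ne_eq, Bool.not_eq_true] at this
    exact this

lemma colorE (s : Finset ℕ) (ι κ : ℕ → ℕ) (hι : Function.Involutive ι)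
    (hκ : Function.Involutive κ) (hs : ∀ x, ι x ≠ x → x ∈ s) (u w z : ℕ)
    (hκu : κ u = u) (hιw : ι w = w) (hz1 : ι z = z) (hz2 : κ z = z) (hzu : z ≠ u) (hzw : z ≠ w) :
    ∃ c : ℕ → Bool, (∀ x, ι x ≠ x → c (ι x) ≠ c x) ∧ (∀ x, κ x ≠ x → c (κ x) ≠ c x) ∧
      c u = true ∧ c w = true := by
  classical
  by_cases huw : u = w
  · obtain ⟨c, hcu, hcι, hcκ⟩ := colorC s.card s ι κ le_rfl hι hκ hs u
    exact ⟨c, hcι, hcκ, hcu, huw ▸ hcu⟩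
  · obtain ⟨ι₂, hι₂def⟩ : ∃ f : ℕ → ℕ,
        (fun x => if x = w then z else if x = z then w else ι x) = f := ⟨_, rfl⟩
    obtain ⟨κ₂, hκ₂def⟩ : ∃ f : ℕ → ℕ,
        (fun x => if x = u then z else if x = z then u else κ x) = f := ⟨_, rfl⟩
    have hι₂eval : ∀ x, ι₂ x = if x = w then z else if x = z then w else ι x :=
      fun x => by rw [← hι₂def]
    have hκ₂eval : ∀ x, κ₂ x = if x = u then z else if x = z then u else κ x :=
      fun x => by rw [← hκ₂def]
    have hι₂inv : Function.Involutive ι₂ := by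
      intro x
      rw [hι₂eval x]
      by_cases hxw : x = w
      · rw [if_pos hxw, hι₂eval z, if_neg hzw, if_pos rfl, hxw]
      · rw [if_neg hxw]
        by_cases hxz : x = z
        · rw [if_pos hxz, hι₂eval w, if_pos rfl, hxz]
        · rw [if_neg hxz, hι₂eval (ι x),
            if_neg (fun h => hxw (by rw [← hιw, ← h, hι])),
            if_neg (fun h => hxz (by rw [← hz1, ← h, hι])), hι]
    have hκ₂inv : Function.Involutive κ₂ := by
      intro x
      rw [hκ₂eval x]
      by_cases hxu : x = u
      · rw [if_pos hxu, hκ₂eval z, if_neg hzu, if_pos rfl, hxu]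
      · rw [if_neg hxu]
        by_cases hxz : x = z
        · rw [if_pos hxz, hκ₂eval u, if_pos rfl, hxz]
        · rw [if_neg hxz, hκ₂eval (κ x),
            if_neg (fun h => hxu (by rw [← hκu, ← h, hκ])),
            if_neg (fun h => hxz (by rw [← hz2, ← h, hκ])), hκ]
    have hs₂ : ∀ x, ι₂ x ≠ x → x ∈ insert z (insert w s) := by
      intro x hx
      rw [hι₂eval x] at hx
      by_cases hxw : x = w
      · exact Finset.mem_insert.2 (Or.inr (Finset.mem_insert.2 (Or.inl hxw)))
      · by_cases hxz : x = z
        · exact Finset.mem_insert.2 (Or.inl hxz)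
        · rw [if_neg hxw, if_neg hxz] at hx
          exact Finset.mem_insert.2 (Or.inr (Finset.mem_insert.2 (Or.inr (hs x hx))))
    obtain ⟨c, hcu, hcι₂, hcκ₂⟩ := colorC (insert z (insert w s)).card (insert z (insert w s))
      ι₂ κ₂ le_rfl hι₂inv hκ₂inv hs₂ u
    have hcz : c z = false := by
      have he : κ₂ u = z := by rw [hκ₂eval u, if_pos rfl]
      have := hcκ₂ u (by rw [he]; exact hzu)
      rw [he, hcu] at this
      simp only [ne_eq, Bool.not_eq_true] at this
      exact this
    have hcw : c w = true := by
      have he : ι₂ w = z := by rw [hι₂eval w, if_pos rfl]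
      have := hcι₂ w (by rw [he]; exact hzw)
      rw [he, hcz] at this
      simpa using Ne.symm this
    refine ⟨c, ?_, ?_, hcu, hcw⟩
    · intro x hx
      have hxw : x ≠ w := fun h => hx (by rw [h, hιw])
      have hxz : x ≠ z := fun h => hx (by rw [h, hz1])
      have he : ι₂ x = ι x := by rw [hι₂eval x, if_neg hxw, if_neg hxz]
      have := hcι₂ x (by rw [he]; exact hx)
      rw [he] at this
      exact this
    · intro x hx
      have hxu : x ≠ u := fun h => hx (by rw [h, hκu])
      have hxz : x ≠ z := fun h => hx (by rw [h, hz2])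
      have he : κ₂ x = κ x := by rw [hκ₂eval x, if_neg hxu, if_neg hxz]
      have := hcκ₂ x (by rw [he]; exact hx)
      rw [he] at this
      exact this
section MAIN

lemma perm_inv_maps (μ : Equiv.Perm ℕ) (S : Finset ℕ) (h : ∀ x ∈ S, μ x ∈ S) :
    ∀ y ∈ S, μ.symm y ∈ S := by
  have himg : S.image (fun x => μ x) = S :=
    Finset.eq_of_subset_of_card_le
      (fun y hy => by
        obtain ⟨x, hx, rfl⟩ := Finset.mem_image.1 hy
        exact h x hx)
      (le_of_eq (Finset.card_image_of_injective S μ.injective).symm)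
  intro y hy
  rw [← himg] at hy
  obtain ⟨x, hx, hxy⟩ := Finset.mem_image.1 hy
  rw [← hxy, Equiv.symm_apply_apply]
  exact hx


lemma permNet_exists : ∀ n, 1 ≤ n → ∃ L : List (ℕ × ℕ), IsPermNet n L ∧
    L.length = ∑ i ∈ Finset.Icc 1 n, Nat.clog 2 i := by
  intro n
  induction n using Nat.strong_induction_on with
  | _ n IH =>
    intro hn
    rcases eq_or_lt_of_le hn with h1 | hn2
    · -- n = 1
      have hn1 : n = 1 := by omega
      subst hn1
      refine ⟨[], ⟨by simp, ?_⟩, by simp [Nat.clog_one_right]⟩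
      intro σ hσ
      refine ⟨[], List.Sublist.refl _, ?_⟩
      have hfix1 : σ 1 = 1 := by
        by_contra hne
        have h2 : σ 1 ∉ Finset.Icc 1 (1:ℕ) := by
          simp only [Finset.mem_Icc]
          intro hc
          exact hne (by omega)
        exact hne (σ.injective (hσ (σ 1) h2))
      rw [netPerm_nil]
      symm
      refine Equiv.ext fun x => ?_
      by_cases hx : x ∈ Finset.Icc 1 (1:ℕ)
      · have hx1 : x = 1 := by
          simp only [Finset.mem_Icc] at hx
          omega
        rw [hx1, hfix1]
        rfl
      · rw [hσ x hx]
        rfl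
    · -- 2 ≤ n
      have hn2' : 2 ≤ n := hn2
      obtain ⟨a, ha⟩ : ∃ a, (n+1)/2 = a := ⟨_, rfl⟩
      obtain ⟨b, hb⟩ : ∃ b, n/2 = b := ⟨_, rfl⟩
      have hab : a + b = n := by omega
      have ha1 : 1 ≤ a := by omega
      have hb1 : 1 ≤ b := by omega
      have hba : b ≤ a := by omega
      have han : a < n := by omega
      have hbn : b < n := by omega
      have h2a : n ≤ 2*a := by omega
      have h2a' : 2*a ≤ n+1 := by omega
      obtain ⟨L₁, ⟨hL₁e, hL₁r⟩, hL₁len⟩ := IH a han ha1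
      obtain ⟨L₂, ⟨hL₂e, hL₂r⟩, hL₂len⟩ := IH b hbn hb1
      refine ⟨pairList a (List.range b) ++ L₁ ++ L₂.map (fun p => (p.1 + a, p.2 + a))
          ++ pairList a (List.range (a-1)), ⟨?_, ?_⟩, ?_⟩
      · -- entries
        intro p hp
        simp only [List.mem_append] at hp
        rcases hp with ((hp | hp) | hp) | hp
        · obtain ⟨i, hi, rfl⟩ := List.mem_map.1 hp
          rw [List.mem_range] at hi
          refine ⟨Finset.mem_Icc.2 (by omega), Finset.mem_Icc.2 (by omega), by omega⟩
        · obtain ⟨h1, h2, h3⟩ := hL₁e p hp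
          rw [Finset.mem_Icc] at h1 h2
          exact ⟨Finset.mem_Icc.2 (by omega), Finset.mem_Icc.2 (by omega), h3⟩
        · obtain ⟨q, hq, rfl⟩ := List.mem_map.1 hp
          obtain ⟨h1, h2, h3⟩ := hL₂e q hq
          rw [Finset.mem_Icc] at h1 h2
          refine ⟨Finset.mem_Icc.2 (by omega), Finset.mem_Icc.2 (by omega), by simp; omega⟩
        · obtain ⟨i, hi, rfl⟩ := List.mem_map.1 hp
          rw [List.mem_range] at hi
          refine ⟨Finset.mem_Icc.2 (by omega), Finset.mem_Icc.2 (by omega), by omega⟩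
      · -- routing
        intro σ hσ
        classical
        have hσin : ∀ x, 1 ≤ x → x ≤ n → 1 ≤ σ x ∧ σ x ≤ n := by
          intro x h1 h2
          by_contra hcon
          have hσx : σ x ∉ Finset.Icc 1 n := by
            simp only [Finset.mem_Icc]
            intro hc
            exact hcon hc
          have h3 := σ.injective (hσ (σ x) hσx)
          rw [h3] at hσx
          simp only [Finset.mem_Icc] at hσx
          omega
        have hσfix' : ∀ x, x ∉ Finset.Icc 1 n → σ.symm x = x := by
          intro x hx
          conv_lhs => rw [← hσ x hx]
          rw [Equiv.symm_apply_apply]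
        have hσsin : ∀ x, 1 ≤ x → x ≤ n → 1 ≤ σ.symm x ∧ σ.symm x ≤ n := by
          intro x h1 h2
          by_contra hcon
          have hy : σ.symm x ∉ Finset.Icc 1 n := by
            simp only [Finset.mem_Icc]
            intro hc
            exact hcon hc
          have h3 := hσ _ hy
          rw [Equiv.apply_symm_apply] at h3
          rw [← h3] at hy
          simp only [Finset.mem_Icc] at hy
          omega
        -- the input and output pairings
        obtain ⟨ι, hιd⟩ : ∃ f : ℕ → ℕ, (fun x => if 1 ≤ x ∧ x ≤ b then x + a
            else if a+1 ≤ x ∧ x ≤ n then x - a else x) = f := ⟨_, rfl⟩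
        have hιe : ∀ x, ι x = if 1 ≤ x ∧ x ≤ b then x + a
            else if a+1 ≤ x ∧ x ≤ n then x - a else x := fun x => by rw [← hιd]
        obtain ⟨ω, hωd⟩ : ∃ f : ℕ → ℕ, (fun x => if 1 ≤ x ∧ x ≤ a-1 then x + a
            else if a+1 ≤ x ∧ x ≤ 2*a-1 then x - a else x) = f := ⟨_, rfl⟩
        have hωe : ∀ x, ω x = if 1 ≤ x ∧ x ≤ a-1 then x + a
            else if a+1 ≤ x ∧ x ≤ 2*a-1 then x - a else x := fun x => by rw [← hωd]
        have hιinv : Function.Involutive ι := by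
          intro x
          rw [hιe x]
          split_ifs with h1 h2
          · rw [hιe (x+a)]
            split_ifs <;> omega
          · rw [hιe (x-a)]
            split_ifs <;> omega
          · rw [hιe x]
            split_ifs <;> omega
        have hωinv : Function.Involutive ω := by
          intro x
          rw [hωe x]
          split_ifs with h1 h2
          · rw [hωe (x+a)]
            split_ifs <;> omega
          · rw [hωe (x-a)]
            split_ifs <;> omega
          · rw [hωe x]
            split_ifs <;> omega
        obtain ⟨κ, hκd⟩ : ∃ f : ℕ → ℕ, (fun x => σ.symm (ω (σ x))) = f := ⟨_, rfl⟩
        have hκe : ∀ x, κ x = σ.symm (ω (σ x)) := fun x => by rw [← hκd]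
        have hκinv : Function.Involutive κ := by
          intro x
          rw [hκe x, hκe _, Equiv.apply_symm_apply, hωinv, Equiv.symm_apply_apply]
        have hsupp : ∀ x, ι x ≠ x → x ∈ Finset.Icc 0 n := by
          intro x hx
          rw [hιe x] at hx
          simp only [Finset.mem_Icc]
          split_ifs at hx <;> omega
        have hωa : ω a = a := by
          rw [hωe a]
          split_ifs <;> omega
        have hκu : κ (σ.symm a) = σ.symm a := by
          rw [hκe _, Equiv.apply_symm_apply, hωa]
        -- the coloring
        obtain ⟨c, hP1, hP2, hPa, hPn, hPv⟩ : ∃ c : ℕ → Bool,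
            (∀ j, 1 ≤ j → j ≤ b → c (j + a) ≠ c j) ∧
            (∀ i, 1 ≤ i → i ≤ a-1 → c (σ.symm (i+a)) ≠ c (σ.symm i)) ∧
            (c (σ.symm a) = true) ∧
            (∀ x, b < x → x ≤ a → c x = true) ∧
            (∀ x, 2*a ≤ x → x ≤ n → c (σ.symm x) = false) := by
          have hP1gen : ∀ (c : ℕ → Bool), (∀ x, ι x ≠ x → c (ι x) ≠ c x) →
              ∀ j, 1 ≤ j → j ≤ b → c (j + a) ≠ c j := by
            intro c hcι j h1 h2
            have he : ι j = j + a := by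
              rw [hιe j, if_pos ⟨h1, h2⟩]
            have := hcι j (by rw [he]; omega)
            rw [he] at this
            exact this
          have hP2gen : ∀ (c : ℕ → Bool), (∀ x, κ x ≠ x → c (κ x) ≠ c x) →
              ∀ i, 1 ≤ i → i ≤ a-1 → c (σ.symm (i+a)) ≠ c (σ.symm i) := by
            intro c hcκ i h1 h2
            have he : κ (σ.symm i) = σ.symm (i + a) := by
              rw [hκe _, Equiv.apply_symm_apply, hωe i, if_pos ⟨h1, h2⟩]
            have hne : κ (σ.symm i) ≠ σ.symm i := by
              rw [he]
              intro hcon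
              have := σ.symm.injective hcon
              omega
            have := hcκ _ hne
            rw [he] at this
            exact this
          by_cases hpar : n = 2*b
          · -- even case
            have haeb : a = b := by omega
            have hωn : ω n = n := by
              rw [hωe n]
              split_ifs <;> omega
            have hκv : κ (σ.symm n) = σ.symm n := by
              rw [hκe _, Equiv.apply_symm_apply, hωn]
            have huv : σ.symm a ≠ σ.symm n := by
              intro h
              have := σ.symm.injective h
              omega
            obtain ⟨c, hcι, hcκ, hcu, hcv⟩ := colorD (Finset.Icc 0 n) ι κ hιinv hκinv
              hsupp _ _ huv hκu hκv
            refine ⟨c, hP1gen c hcι, hP2gen c hcκ, hcu, ?_, ?_⟩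
            · intro x hx1 hx2
              omega
            · intro x hx1 hx2
              rw [show x = n by omega]
              exact hcv
          · -- odd case
            have hodd : n = 2*a - 1 := by omega
            have hba2 : b = a - 1 := by omega
            have hιa : ι a = a := by
              rw [hιe a]
              split_ifs <;> omega
            have hι0 : ι 0 = 0 := by
              rw [hιe 0]
              split_ifs <;> omega
            have hκ0 : κ 0 = 0 := by
              have h0 : (0:ℕ) ∉ Finset.Icc 1 n := by simp
              have hω0 : ω 0 = 0 := by
                rw [hωe 0]
                split_ifs <;> omega
              rw [hκe 0, hσ 0 h0, hω0, hσfix' 0 h0]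
            have hzu : (0:ℕ) ≠ σ.symm a := by
              have := hσsin a (by omega) (by omega)
              omega
            obtain ⟨c, hcι, hcκ, hcu, hcw⟩ := colorE (Finset.Icc 0 n) ι κ hιinv hκinv
              hsupp (σ.symm a) a 0 hκu hιa hι0 hκ0 hzu (by omega)
            refine ⟨c, hP1gen c hcι, hP2gen c hcκ, hcu, ?_, ?_⟩
            · intro x hx1 hx2
              rw [show x = a by omega]
              exact hcw
            · intro x hx1 hx2
              omega
        -- the switch lists
        obtain ⟨lin, hlind⟩ : ∃ l, (List.range b).filter (fun i => !c (i+1)) = l := ⟨_, rfl⟩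
        obtain ⟨lout, hloutd⟩ : ∃ l, (List.range (a-1)).filter (fun i => !c (σ.symm (i+1))) = l :=
          ⟨_, rfl⟩
        have hlinmem : ∀ i, i ∈ lin ↔ (i < b ∧ c (i+1) = false) := by
          intro i
          rw [← hlind, List.mem_filter, List.mem_range]
          simp
        have hloutmem : ∀ i, i ∈ lout ↔ (i < a-1 ∧ c (σ.symm (i+1)) = false) := by
          intro i
          rw [← hloutd, List.mem_filter, List.mem_range]
          simp
        have hlinnd : lin.Nodup := by rw [← hlind]; exact (List.nodup_range : (List.range b).Nodup).filter _
        have hloutnd : lout.Nodup := by rw [← hloutd]; exact (List.nodup_range : (List.range (a-1)).Nodup).filter _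
        have hlinlt : ∀ i ∈ lin, i < a := fun i hi => by
          have := (hlinmem i).1 hi
          omega
        have hloutlt : ∀ i ∈ lout, i < a := fun i hi => by
          have := (hloutmem i).1 hi
          omega
        have E1 := netPerm_pairList a lin hlinnd hlinlt
        have E3 := netPerm_pairList a lout hloutnd hloutlt
        have Sq1 := netPerm_pairList_sq a lin hlinnd hlinlt
        have Sq3 := netPerm_pairList_sq a lout hloutnd hloutlt
        -- range facts for the input/output stages
        have hT1in : ∀ x, 1 ≤ x → x ≤ n →
            1 ≤ netPerm (pairList a lin) x ∧ netPerm (pairList a lin) x ≤ n := by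
          intro x h1 h2
          rw [E1 x]
          split_ifs with hc1 hc2
          · have := (hlinmem _).1 hc1.2.2
            omega
          · omega
          · omega
        have hT3in : ∀ x, 1 ≤ x → x ≤ n →
            1 ≤ netPerm (pairList a lout) x ∧ netPerm (pairList a lout) x ≤ n := by
          intro x h1 h2
          rw [E3 x]
          split_ifs with hc1 hc2
          · have := (hloutmem _).1 hc1.2.2
            omega
          · omega
          · omega
        have hT1fix : ∀ x, ¬(1 ≤ x ∧ x ≤ n) → netPerm (pairList a lin) x = x := by
          intro x hx
          rw [E1 x, if_neg, if_neg]
          · intro hcon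
            have := (hlinmem _).1 hcon.2
            omega
          · intro hcon
            omega
        have hT3fix : ∀ x, ¬(1 ≤ x ∧ x ≤ n) → netPerm (pairList a lout) x = x := by
          intro x hx
          rw [E3 x, if_neg, if_neg]
          · intro hcon
            have := (hloutmem _).1 hcon.2
            omega
          · intro hcon
            omega
        -- claim A
        have claimA : ∀ x, 1 ≤ x → x ≤ n →
            ((1 ≤ netPerm (pairList a lin) x ∧ netPerm (pairList a lin) x ≤ a) ↔ c x = true) := by
          intro x h1 h2
          rw [E1 x]
          by_cases hxb : x ≤ b
          · by_cases hcx : c x = true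
            · rw [if_neg, if_neg]
              · simp only [hcx, iff_true]
                omega
              · intro hcon
                omega
              · rintro ⟨-, -, hmem⟩
                have := (hlinmem _).1 hmem
                rw [show x-1+1 = x by omega, hcx] at this
                simp at this
            · rw [Bool.not_eq_true] at hcx
              rw [if_pos ⟨h1, by omega, (hlinmem _).2 ⟨by omega, by rw [show x-1+1 = x by omega]; exact hcx⟩⟩]
              simp only [hcx, Bool.false_eq_true, iff_false]
              omega
          · by_cases hxa : x ≤ a
            · rw [if_neg, if_neg]
              · simp only [hPn x (by omega) hxa, iff_true]
                omega
              · intro hcon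
                omega
              · rintro ⟨-, -, hmem⟩
                have := (hlinmem _).1 hmem
                omega
            · have hnot1 : ¬(1 ≤ x ∧ x ≤ a ∧ (x-1) ∈ lin) := by
                rintro ⟨-, hc, -⟩
                omega
              rw [if_neg hnot1]
              have hkey := hP1 (x-a) (by omega) (by omega)
              rw [show x-a+a = x by omega] at hkey
              by_cases hm : (x - a - 1) ∈ lin
              · have hmm := (hlinmem _).1 hm
                rw [show x-a-1+1 = x-a by omega] at hmm
                have hcx : c x = true := by
                  by_contra hcon
                  rw [Bool.not_eq_true] at hcon
                  rw [hcon, hmm.2] at hkey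
                  exact hkey rfl
                rw [if_pos ⟨by omega, hm⟩]
                simp only [hcx, iff_true]
                omega
              · have hcxa : c (x-a) = true := by
                  by_contra hcon
                  rw [Bool.not_eq_true] at hcon
                  exact hm ((hlinmem _).2 ⟨by omega, by rw [show x-a-1+1 = x-a by omega]; exact hcon⟩)
                have hcx : c x = false := by
                  by_contra hcon
                  rw [Bool.not_eq_false] at hcon
                  rw [hcon, hcxa] at hkey
                  exact hkey rfl
                rw [if_neg (fun hcon => hm hcon.2)]
                simp only [hcx, Bool.false_eq_true, iff_false]
                omega
        -- claim B
        have claimB : ∀ x, 1 ≤ x → x ≤ n →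
            ((1 ≤ netPerm (pairList a lout) x ∧ netPerm (pairList a lout) x ≤ a) ↔
              c (σ.symm x) = true) := by
          intro x h1 h2
          rw [E3 x]
          by_cases hxa1 : x ≤ a-1
          · by_cases hcx : c (σ.symm x) = true
            · rw [if_neg, if_neg]
              · simp only [hcx, iff_true]
                omega
              · intro hcon
                omega
              · rintro ⟨-, -, hmem⟩
                have := (hloutmem _).1 hmem
                rw [show x-1+1 = x by omega, hcx] at this
                simp at this
            · rw [Bool.not_eq_true] at hcx
              rw [if_pos ⟨h1, by omega, (hloutmem _).2 ⟨by omega, by rw [show x-1+1 = x by omega]; exact hcx⟩⟩]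
              simp only [hcx, Bool.false_eq_true, iff_false]
              omega
          · by_cases hxa : x ≤ a
            · have hxa2 : x = a := by omega
              rw [if_neg, if_neg]
              · rw [hxa2]
                simp only [hPa, iff_true]
                omega
              · intro hcon
                omega
              · rintro ⟨-, -, hmem⟩
                have := (hloutmem _).1 hmem
                omega
            · by_cases hx2a : x ≤ 2*a-1
              · have hnot1 : ¬(1 ≤ x ∧ x ≤ a ∧ (x-1) ∈ lout) := by
                  rintro ⟨-, hc, -⟩
                  omega
                rw [if_neg hnot1]
                have hkey := hP2 (x-a) (by omega) (by omega)
                rw [show x-a+a = x by omega] at hkey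
                by_cases hm : (x - a - 1) ∈ lout
                · have hmm := (hloutmem _).1 hm
                  rw [show x-a-1+1 = x-a by omega] at hmm
                  have hcx : c (σ.symm x) = true := by
                    by_contra hcon
                    rw [Bool.not_eq_true] at hcon
                    rw [hcon, hmm.2] at hkey
                    exact hkey rfl
                  rw [if_pos ⟨by omega, hm⟩]
                  simp only [hcx, iff_true]
                  omega
                · have hcxa : c (σ.symm (x-a)) = true := by
                    by_contra hcon
                    rw [Bool.not_eq_true] at hcon
                    exact hm ((hloutmem _).2 ⟨by omega, by rw [show x-a-1+1 = x-a by omega]; exact hcon⟩)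
                  have hcx : c (σ.symm x) = false := by
                    by_contra hcon
                    rw [Bool.not_eq_false] at hcon
                    rw [hcon, hcxa] at hkey
                    exact hkey rfl
                  rw [if_neg (fun hcon => hm hcon.2)]
                  simp only [hcx, Bool.false_eq_true, iff_false]
                  omega
              · rw [if_neg, if_neg]
                · simp only [hPv x (by omega) (by omega), Bool.false_eq_true, iff_false]
                  omega
                · rintro ⟨-, hmem⟩
                  have := (hloutmem _).1 hmem
                  omega
                · rintro ⟨-, hc, -⟩
                  omega
        -- the middle permutation
        obtain ⟨μ, hμd⟩ : ∃ μ : Equiv.Perm ℕ,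
            netPerm (pairList a lout) * σ * netPerm (pairList a lin) = μ := ⟨_, rfl⟩
        have hμap : ∀ x, μ x = netPerm (pairList a lout) (σ (netPerm (pairList a lin) x)) :=
          fun x => by rw [← hμd]; rfl
        have hμ1 : ∀ m, 1 ≤ m → m ≤ a → 1 ≤ μ m ∧ μ m ≤ a := by
          intro m h1 h2
          have hx1 := hT1in m h1 (by omega)
          have hcx : c (netPerm (pairList a lin) m) = true := by
            refine (claimA _ hx1.1 hx1.2).1 ?_
            rw [Sq1 m]
            exact ⟨h1, h2⟩
          have hw := hσin _ hx1.1 hx1.2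
          have hcb := (claimB _ hw.1 hw.2).2 (by rw [Equiv.symm_apply_apply]; exact hcx)
          rw [hμap m]
          exact hcb
        have hμ2 : ∀ m, a+1 ≤ m → m ≤ n → a+1 ≤ μ m ∧ μ m ≤ n := by
          intro m h1 h2
          have hx1 := hT1in m (by omega) h2
          have hcx : c (netPerm (pairList a lin) m) = false := by
            by_contra hcon
            rw [Bool.not_eq_false] at hcon
            have := (claimA _ hx1.1 hx1.2).2 hcon
            rw [Sq1 m] at this
            omega
          have hw := hσin _ hx1.1 hx1.2
          have hT3 := hT3in _ hw.1 hw.2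
          have hcb : ¬(1 ≤ netPerm (pairList a lout) (σ (netPerm (pairList a lin) m)) ∧
              netPerm (pairList a lout) (σ (netPerm (pairList a lin) m)) ≤ a) := by
            intro hcon
            have := (claimB _ hw.1 hw.2).1 hcon
            rw [Equiv.symm_apply_apply, hcx] at this
            simp at this
          rw [hμap m]
          omega
        have hμfix : ∀ x, ¬(1 ≤ x ∧ x ≤ n) → μ x = x := by
          intro x hx
          rw [hμap x, hT1fix x hx,
            hσ x (by simp only [Finset.mem_Icc]; intro hc; exact hx hc), hT3fix x hx]
        -- the top permutation π
        have hmapsπ : ∀ x ∈ Finset.Icc 1 a, μ x ∈ Finset.Icc 1 a := by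
          intro x hx
          rw [Finset.mem_Icc] at hx ⊢
          exact hμ1 x hx.1 hx.2
        have hinvπ := perm_inv_maps μ (Finset.Icc 1 a) hmapsπ
        obtain ⟨π, hπe⟩ : ∃ π : Equiv.Perm ℕ, ∀ x, π x = if 1 ≤ x ∧ x ≤ a then μ x else x := by
          refine ⟨⟨fun x => if 1 ≤ x ∧ x ≤ a then μ x else x,
            fun y => if 1 ≤ y ∧ y ≤ a then μ.symm y else y, ?_, ?_⟩, fun x => rfl⟩
          · intro x
            by_cases hx : 1 ≤ x ∧ x ≤ a
            · simp only [if_pos hx]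
              have hmx : 1 ≤ μ x ∧ μ x ≤ a := hμ1 x hx.1 hx.2
              rw [if_pos hmx, Equiv.symm_apply_apply]
            · simp only [if_neg hx]
          · intro y
            by_cases hy : 1 ≤ y ∧ y ≤ a
            · simp only [if_pos hy]
              have hmy : μ.symm y ∈ Finset.Icc 1 a :=
                hinvπ y (Finset.mem_Icc.2 hy)
              rw [Finset.mem_Icc] at hmy
              rw [if_pos hmy, Equiv.apply_symm_apply]
            · simp only [if_neg hy]
        -- the bottom permutation ρ (unshifted)
        have hmapsρ : ∀ x ∈ Finset.Icc (a+1) n, μ x ∈ Finset.Icc (a+1) n := by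
          intro x hx
          rw [Finset.mem_Icc] at hx ⊢
          exact hμ2 x hx.1 hx.2
        have hinvρ := perm_inv_maps μ (Finset.Icc (a+1) n) hmapsρ
        obtain ⟨ρ, hρe⟩ : ∃ ρ : Equiv.Perm ℕ,
            ∀ x, ρ x = if 1 ≤ x ∧ x ≤ b then μ (x + a) - a else x := by
          refine ⟨⟨fun x => if 1 ≤ x ∧ x ≤ b then μ (x + a) - a else x,
            fun y => if 1 ≤ y ∧ y ≤ b then μ.symm (y + a) - a else y, ?_, ?_⟩, fun x => rfl⟩
          · intro x
            by_cases hx : 1 ≤ x ∧ x ≤ b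
            · simp only [if_pos hx]
              have hmx := hμ2 (x+a) (by omega) (by omega)
              rw [if_pos (by omega : 1 ≤ μ (x+a) - a ∧ μ (x+a) - a ≤ b),
                show μ (x+a) - a + a = μ (x+a) by omega, Equiv.symm_apply_apply]
              omega
            · simp only [if_neg hx]
          · intro y
            by_cases hy : 1 ≤ y ∧ y ≤ b
            · simp only [if_pos hy]
              have hmy : μ.symm (y+a) ∈ Finset.Icc (a+1) n :=
                hinvρ (y+a) (Finset.mem_Icc.2 (by omega))
              rw [Finset.mem_Icc] at hmy
              rw [if_pos (by omega : 1 ≤ μ.symm (y+a) - a ∧ μ.symm (y+a) - a ≤ b),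
                show μ.symm (y+a) - a + a = μ.symm (y+a) by omega, Equiv.apply_symm_apply]
              omega
            · simp only [if_neg hy]
        -- the shifted bottom permutation ρ'
        obtain ⟨ρ', hρ'e⟩ : ∃ ρ' : Equiv.Perm ℕ,
            ∀ x, ρ' x = if a+1 ≤ x ∧ x ≤ n then μ x else x := by
          refine ⟨⟨fun x => if a+1 ≤ x ∧ x ≤ n then μ x else x,
            fun y => if a+1 ≤ y ∧ y ≤ n then μ.symm y else y, ?_, ?_⟩, fun x => rfl⟩
          · intro x
            by_cases hx : a+1 ≤ x ∧ x ≤ n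
            · simp only [if_pos hx]
              have hmx := hμ2 x hx.1 hx.2
              rw [if_pos hmx, Equiv.symm_apply_apply]
            · simp only [if_neg hx]
          · intro y
            by_cases hy : a+1 ≤ y ∧ y ≤ n
            · simp only [if_pos hy]
              have hmy : μ.symm y ∈ Finset.Icc (a+1) n :=
                hinvρ y (Finset.mem_Icc.2 hy)
              rw [Finset.mem_Icc] at hmy
              rw [if_pos hmy, Equiv.apply_symm_apply]
            · simp only [if_neg hy]
        -- get the sub-networks
        obtain ⟨S₁, hS₁sub, hS₁⟩ := hL₁r π (by
          intro x hx
          rw [Finset.mem_Icc] at hx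
          rw [hπe x, if_neg hx])
        obtain ⟨S₂, hS₂sub, hS₂⟩ := hL₂r ρ (by
          intro x hx
          rw [Finset.mem_Icc] at hx
          rw [hρe x, if_neg hx])
        have hshift : netPerm (S₂.map (fun p => (p.1 + a, p.2 + a))) = ρ' := by
          refine Equiv.ext fun x => ?_
          rw [netPerm_shift a S₂ x, hS₂, hρ'e x]
          by_cases hxa : a ≤ x
          · rw [if_pos hxa, hρe (x-a)]
            by_cases hxn : x ≤ n
            · by_cases hxa2 : a + 1 ≤ x
              · have hmx := hμ2 x hxa2 hxn
                rw [if_pos (by omega : 1 ≤ x - a ∧ x - a ≤ b),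
                  show x - a + a = x by omega, if_pos ⟨hxa2, hxn⟩]
                omega
              · have hxa3 : x = a := by omega
                rw [if_neg (by omega : ¬(1 ≤ x - a ∧ x - a ≤ b)),
                  if_neg (by omega : ¬(a+1 ≤ x ∧ x ≤ n))]
                omega
            · rw [if_neg (by omega : ¬(1 ≤ x - a ∧ x - a ≤ b)),
                if_neg (by omega : ¬(a+1 ≤ x ∧ x ≤ n))]
              omega
          · rw [if_neg hxa, if_neg (by omega : ¬(a+1 ≤ x ∧ x ≤ n))]
        -- assemble
        refine ⟨pairList a lin ++ S₁ ++ S₂.map (fun p => (p.1 + a, p.2 + a)) ++ pairList a lout,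
          ?_, ?_⟩
        · refine List.Sublist.append (List.Sublist.append (List.Sublist.append ?_ hS₁sub)
            (hS₂sub.map _)) ?_
          · rw [← hlind]
            exact List.Sublist.map _ (List.filter_sublist)
          · rw [← hloutd]
            exact List.Sublist.map _ (List.filter_sublist)
        · rw [netPerm_append, netPerm_append, netPerm_append, hS₁, hshift]
          have hT1sq : netPerm (pairList a lin) * netPerm (pairList a lin) = 1 :=
            Equiv.ext fun x => Sq1 x
          have hT3sq : netPerm (pairList a lout) * netPerm (pairList a lout) = 1 :=
            Equiv.ext fun x => Sq3 x
          have hfact : ρ' * π = μ := by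
            refine Equiv.ext fun x => ?_
            simp only [Equiv.Perm.mul_apply]
            rw [hπe x]
            by_cases hx : 1 ≤ x ∧ x ≤ a
            · rw [if_pos hx, hρ'e (μ x)]
              have := hμ1 x hx.1 hx.2
              rw [if_neg (by omega : ¬(a+1 ≤ μ x ∧ μ x ≤ n))]
            · rw [if_neg hx, hρ'e x]
              by_cases hx2 : a+1 ≤ x ∧ x ≤ n
              · rw [if_pos hx2]
              · rw [if_neg hx2]
                exact (hμfix x (by omega)).symm
          calc netPerm (pairList a lout) * (ρ' * (π * netPerm (pairList a lin)))
              = netPerm (pairList a lout) * ((ρ' * π) * netPerm (pairList a lin)) := by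
                rw [mul_assoc]
            _ = netPerm (pairList a lout) * (μ * netPerm (pairList a lin)) := by rw [hfact]
            _ = netPerm (pairList a lout) *
                ((netPerm (pairList a lout) * σ * netPerm (pairList a lin)) *
                  netPerm (pairList a lin)) := by rw [hμd]
            _ = σ := by
                rw [mul_assoc (netPerm (pairList a lout) * σ) (netPerm (pairList a lin))
                  (netPerm (pairList a lin)), hT1sq, mul_one, ← mul_assoc,
                  hT3sq, one_mul]
      · -- length
        have hlen1 : (pairList a (List.range b)).length = b := by simp [pairList]
        have hlen4 : (pairList a (List.range (a-1))).length = a - 1 := by simp [pairList]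
        simp only [List.length_append, List.length_map, hlen1, hlen4, hL₁len, hL₂len]
        rw [Wrec n hn2', ha, hb]
        omega

end MAIN

/-- **Theorem 1 (Waksman; Beauquier–Darrot).** For every `n ≥ 1` there is a
permutation network on `n` elements using `∑_{i=1}^n ⌈log₂ i⌉` transpositions. -/
theorem exists_permutation_network (n : ℕ) (hn : 1 ≤ n) :
    ∃ L : List (ℕ × ℕ), IsPermNet n L ∧
      L.length = ∑ i ∈ Finset.Icc 1 n, Nat.clog 2 i := by
  exact permNet_exists n hn
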